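/- Let F : ℝ → M_n(ℂ) be a one-parameter subgroup of GL_n(ℂ), i.e. F is continuous, F(0) = I, F(t+s) = F(t)·F(s) for all real t, s, and every F(t) is invertible. Then there exists a unique n×n complex matrix X such that F(t) = exp(t·X) for all t ∈ ℝ. (Property 1.) -/

import Mathlib

open NormedSpace intervalIntegral MeasureTheory

attribute [local instance] Matrix.linftyOpNormedRing Matrix.linftyOpNormedAlgebra

/-- Property 1: if `F : ℝ → Mₙ(ℂ)` is a one-parameter subgroup of `GLₙ(ℂ)`
(`F` is continuous, `F 0 = 1`, `F (t + s) = F t * F s`, and every `F t` is invertible),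
then there is a unique `n × n` complex matrix `X` with `F t = exp (t • X)` for all `t : ℝ`. -/
theorem one_parameter_subgroup_eq_exp (n : ℕ) (F : ℝ → Matrix (Fin n) (Fin n) ℂ)
    (hcont : Continuous F) (h0 : F 0 = 1) (hadd : ∀ t s : ℝ, F (t + s) = F t * F s)
    (hunit : ∀ t : ℝ, IsUnit (F t)) :
    ∃! X : Matrix (Fin n) (Fin n) ℂ, ∀ t : ℝ, F t = NormedSpace.exp (t • X) := by
  classical
  haveI : CompleteSpace (Matrix (Fin n) (Fin n) ℂ) :=
    FiniteDimensional.complete ℂ _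
  letI : TopologicalSpace (Matrix (Fin n) (Fin n) ℂ) :=
    (inferInstance : PseudoMetricSpace (Matrix (Fin n) (Fin n) ℂ)).toUniformSpace.toTopologicalSpace
  replace hcont : Continuous F := hcont
  have hexp : ∀ A : Matrix (Fin n) (Fin n) ℂ,
      @NormedSpace.exp _ _ instTopologicalSpaceMatrix _ A = NormedSpace.exp A := fun A =>
    rfl
  -- uniqueness
  have huniq : ∀ X Y : Matrix (Fin n) (Fin n) ℂ,
      (∀ t : ℝ, exp (t • X) = exp (t • Y)) → X = Y := by
    intro X Y h
    have hX := hasDerivAt_exp_smul_const (𝕂 := ℝ) X (0 : ℝ)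
    have hY := hasDerivAt_exp_smul_const (𝕂 := ℝ) Y (0 : ℝ)
    rw [funext h] at hX
    have := hX.unique hY
    simpa [zero_smul, exp_zero] using this
  -- choose ε
  obtain ⟨ε, hε, hball⟩ : ∃ ε > (0:ℝ), ∀ s ∈ Set.Icc (0:ℝ) ε, ‖F s - 1‖ ≤ 1/2 := by
    have hc : ContinuousAt F 0 := hcont.continuousAt
    rw [Metric.continuousAt_iff] at hc
    obtain ⟨δ, hδ, h⟩ := hc (1/2) (by norm_num)
    refine ⟨δ/2, by positivity, fun s hs => ?_⟩
    have hd : dist s 0 < δ := by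
      rw [Real.dist_eq, sub_zero, abs_of_nonneg hs.1]
      linarith [hs.2]
    have := h hd
    rw [h0] at this
    rw [← dist_eq_norm]
    exact this.le
  have hεne : (ε : ℝ) ≠ 0 := ne_of_gt hε
  have hint : ∀ a b : ℝ, IntervalIntegrable F volume a b := fun a b =>
    hcont.intervalIntegrable a b
  set A : Matrix (Fin n) (Fin n) ℂ := ∫ s in (0:ℝ)..ε, F s with hA_def
  -- A is a unit
  have hBnorm : ‖(ε⁻¹ : ℝ) • A - 1‖ ≤ 1/2 := by
    have h1 : A - (ε - 0) • (1 : Matrix (Fin n) (Fin n) ℂ) = ∫ s in (0:ℝ)..ε, (F s - 1) := by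
      rw [intervalIntegral.integral_sub (hint 0 ε) intervalIntegrable_const,
        intervalIntegral.integral_const]
    have h2 : ‖∫ s in (0:ℝ)..ε, (F s - 1)‖ ≤ 1/2 * |ε - 0| := by
      apply intervalIntegral.norm_integral_le_of_norm_le_const
      intro x hx
      rw [Set.uIoc_of_le hε.le] at hx
      exact hball x ⟨hx.1.le, hx.2⟩
    have h3 : (ε⁻¹ : ℝ) • A - 1 = (ε⁻¹ : ℝ) • (A - (ε - 0) • (1 : Matrix (Fin n) (Fin n) ℂ)) := by
      rw [smul_sub, smul_smul]
      rw [sub_zero]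
      rw [inv_mul_cancel₀ hεne, one_smul]
    rw [h3, norm_smul, h1]
    calc ‖(ε⁻¹:ℝ)‖ * ‖∫ s in (0:ℝ)..ε, (F s - 1)‖
        ≤ ‖(ε⁻¹:ℝ)‖ * (1/2 * |ε - 0|) := by
          exact mul_le_mul_of_nonneg_left h2 (norm_nonneg _)
      _ = 1/2 := by
          rw [Real.norm_eq_abs, sub_zero, abs_of_pos (inv_pos.2 hε), abs_of_pos hε]
          field_simp
  have hB : IsUnit ((ε⁻¹ : ℝ) • A) := by
    have hlt : ‖(1 : Matrix (Fin n) (Fin n) ℂ) - (ε⁻¹ : ℝ) • A‖ < 1 := by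
      rw [norm_sub_rev]
      linarith [hBnorm]
    have := (Units.oneSub (1 - (ε⁻¹ : ℝ) • A) hlt).isUnit
    simpa using this
  have hA : IsUnit A := by
    obtain ⟨u, hu⟩ := hB
    refine ⟨⟨A, (ε⁻¹ : ℝ) • (↑u⁻¹ : Matrix (Fin n) (Fin n) ℂ), ?_, ?_⟩, rfl⟩
    · rw [mul_smul_comm, ← smul_mul_assoc, ← hu, u.mul_inv]
    · rw [smul_mul_assoc, ← mul_smul_comm, ← hu, u.inv_mul]
  set Ainv : Matrix (Fin n) (Fin n) ℂ := ↑hA.unit⁻¹ with hAinv_def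
  have hAAinv : A * Ainv = 1 := by
    have := hA.unit.mul_inv
    rwa [IsUnit.unit_spec] at this
  -- key identity
  have key : ∀ t : ℝ, F t * A = ∫ s in t..(t+ε), F s := by
    intro t
    have h1 := (ContinuousLinearMap.mul ℝ (Matrix (Fin n) (Fin n) ℂ)
      (F t)).intervalIntegral_comp_comm (μ := volume) (hint 0 ε)
    simp only [ContinuousLinearMap.mul_apply'] at h1
    have h2 : (∫ s in (0:ℝ)..ε, F t * F s) = ∫ s in (0:ℝ)..ε, F (t + s) :=
      intervalIntegral.integral_congr fun s _ => (hadd t s).symm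
    have h3 := intervalIntegral.integral_comp_add_left (a := (0:ℝ)) (b := ε) F t
    rw [← h1, h2, h3, add_zero]
  -- antiderivative
  set Φ : ℝ → Matrix (Fin n) (Fin n) ℂ := fun u => ∫ s in (0:ℝ)..u, F s with hΦ_def
  have hΦ : ∀ u : ℝ, HasDerivAt Φ (F u) u := by
    intro u
    exact intervalIntegral.integral_hasDerivAt_right (hint 0 u)
      (hcont.stronglyMeasurableAtFilter _ _) hcont.continuousAt
  have hrep : ∀ t : ℝ, F t = (Φ (t + ε) - Φ t) * Ainv := by
    intro t
    have hsub : Φ (t + ε) - Φ t = ∫ s in t..(t+ε), F s := by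
      rw [hΦ_def]
      exact intervalIntegral.integral_interval_sub_left (hint 0 (t+ε)) (hint 0 t)
    rw [hsub, ← key, mul_assoc, hAAinv, mul_one]
  -- derivative of F
  set X : Matrix (Fin n) (Fin n) ℂ := (F ε - 1) * Ainv with hX_def
  have hF' : ∀ t : ℝ, HasDerivAt F (F t * X) t := by
    intro t
    have h1 : HasDerivAt (fun u : ℝ => Φ (u + ε)) (F (t + ε)) t := by
      have := (hΦ (t + ε)).scomp t ((hasDerivAt_id t).add_const ε)
      rw [one_smul] at this
      exact this
    have h2 : HasDerivAt (fun u : ℝ => (Φ (u + ε) - Φ u) * Ainv)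
        ((F (t + ε) - F t) * Ainv) t := (h1.sub (hΦ t)).mul_const Ainv
    have h3 : (F (t + ε) - F t) * Ainv = F t * X := by
      rw [hadd t ε, hX_def]
      noncomm_ring
    rw [h3] at h2
    exact h2.congr_of_eventuallyEq (Filter.Eventually.of_forall fun x => hrep x)
  -- ODE uniqueness, forward
  have hg : ∀ t : ℝ, HasDerivAt (fun u : ℝ => exp (u • X)) (exp (t • X) * X) t :=
    fun t => hasDerivAt_exp_smul_const (𝕂 := ℝ) X t
  have hLip : LipschitzWith ‖X‖₊ (fun y : Matrix (Fin n) (Fin n) ℂ => y * X) := by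
    apply LipschitzWith.of_dist_le_mul
    intro a b
    rw [dist_eq_norm, dist_eq_norm, ← sub_mul]
    calc ‖(a - b) * X‖ ≤ ‖a - b‖ * ‖X‖ := norm_mul_le _ _
      _ = ↑‖X‖₊ * ‖a - b‖ := by rw [coe_nnnorm, mul_comm]
  have hgc : Continuous (fun u : ℝ => exp (u • X)) :=
    continuous_iff_continuousAt.2 fun t => (hg t).continuousAt
  have hfwd : ∀ t : ℝ, 0 ≤ t → F t = exp (t • X) := by
    intro t ht
    have heq := ODE_solution_unique (v := fun _ y => y * X) (a := 0) (b := t) (fun _ => hLip)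
      (hcont.continuousOn) (fun s _ => (hF' s).hasDerivWithinAt)
      (hgc.continuousOn) (fun s _ => (hg s).hasDerivWithinAt)
      (by simp [h0, zero_smul, exp_zero])
    exact heq ⟨ht, le_refl t⟩
  -- all t
  have hall : ∀ t : ℝ, F t = exp (t • X) := by
    intro t
    rcases le_or_gt 0 t with ht | ht
    · exact hfwd t ht
    · have h1 : F (-t) = exp ((-t) • X) := hfwd _ (by linarith)
      have hc : Commute ((-t) • X) (t • X) := ((Commute.refl X).smul_left (-t)).smul_right t
      have h2 : exp ((-t) • X) * exp (t • X) = 1 := by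
        rw [← exp_add_of_commute hc, ← add_smul, neg_add_cancel, zero_smul, exp_zero]
      calc F t = F t * (exp ((-t) • X) * exp (t • X)) := by rw [h2, mul_one]
        _ = (F t * F (-t)) * exp (t • X) := by rw [h1, mul_assoc]
        _ = exp (t • X) := by rw [← hadd, add_neg_cancel, h0, one_mul]
  refine ⟨X, fun t => by rw [hexp]; exact hall t, fun Y hY => ?_⟩
  refine huniq Y X fun t => ?_
  rw [← hexp, ← hexp, ← hY t, hall t]
  exact (hexp _).symm
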